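/- Fix n ≥ 3 and 2 ≤ i ≤ n−1, and define w ∈ ℝ^n by: w_{i−1} = 1, w_i = 0, w_{i+1} = −1, w_{i−2} = (δ+ε)/(1+δ) (if i−2 ≥ 1), w_{i+2} = −(δ+ε)/(1+δ) (if i+2 ≤ n), and w_k = 0 for all other k. Then for every x ∈ ℝ^n whose output y := Wx + θ satisfies y_j ≥ 0 for j ∈ {i−1, i, i+1} and y_k ≤ 0 for k ∉ {i−1, i, i+1} (i.e. x lies in the triple-support cell C_{{i−1,i,i+1}}), the vector field of the CSTLN satisfies w^⊤(−x + [y]_+) = δ · (w^⊤ x). Consequently, along any solution of ẋ = −x + [Wx+θ]_+ remaining in C_{{i−1,i,i+1}}, the scalar φ(x) := w^⊤x obeys φ̇ = δ φ. -/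

import Mathlib

open Matrix

/-- With `w` the left eigenvector (eigenvalue `δ`) of the
triple-support-cell Jacobian, for every `x` in the triple-support cell
`C_{i−1,i,i+1}` the CSTLN vector field satisfies `wᵀ(−x + [y]₊) = δ (wᵀ x)`;
consequently along any solution remaining in the cell, `φ(x) = wᵀx` obeys
`φ̇ = δ φ`. Indices are 0-based: `1 ≤ i` and `i + 1 < n` correspond to the
1-based statement `2 ≤ i ≤ n−1`. -/
theorem cstln_triple_cell_unstable_eigcoordinate (n i : ℕ) (hn : 3 ≤ n)
    (hi1 : 1 ≤ i) (hi2 : i + 1 < n)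
    (ε δ c : ℝ) (hε : 0 < ε) (hε1 : ε < 1) (hδ : 0 < δ) (hc : 0 < c)
    (W : Matrix (Fin n) (Fin n) ℝ)
    (hW : ∀ k l : Fin n, W k l =
      if (k : ℕ) = (l : ℕ) then 0
      else if ((k : ℤ) - (l : ℤ)).natAbs = 1 then -1 + ε else -1 - δ)
    (w : Fin n → ℝ)
    (hw : ∀ k : Fin n, w k =
      if (k : ℕ) = i - 1 then 1
      else if (k : ℕ) = i + 1 then -1
      else if (k : ℕ) + 2 = i then (δ + ε) / (1 + δ)
      else if (k : ℕ) = i + 2 then -((δ + ε) / (1 + δ))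
      else 0) :
    -- algebraic identity on the triple-support cell
    (∀ x : Fin n → ℝ,
      (∀ j : Fin n, ((j : ℕ) = i - 1 ∨ (j : ℕ) = i ∨ (j : ℕ) = i + 1) →
        0 ≤ W.mulVec x j + c) →
      (∀ k : Fin n, ¬((k : ℕ) = i - 1 ∨ (k : ℕ) = i ∨ (k : ℕ) = i + 1) →
        W.mulVec x k + c ≤ 0) →
      (∑ j, w j * (-(x j) + max (W.mulVec x j + c) 0)) = δ * ∑ j, w j * x j) ∧
    -- consequence along solutions of `ẋ = −x + [Wx + θ]₊` inside the cell
    (∀ (x : ℝ → Fin n → ℝ) (t : ℝ),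
      (∀ j : Fin n, HasDerivAt (fun s => x s j)
        (-(x t j) + max (W.mulVec (x t) j + c) 0) t) →
      (∀ j : Fin n, ((j : ℕ) = i - 1 ∨ (j : ℕ) = i ∨ (j : ℕ) = i + 1) →
        0 ≤ W.mulVec (x t) j + c) →
      (∀ k : Fin n, ¬((k : ℕ) = i - 1 ∨ (k : ℕ) = i ∨ (k : ℕ) = i + 1) →
        W.mulVec (x t) k + c ≤ 0) →
      HasDerivAt (fun s => ∑ j, w j * x s j) (δ * ∑ j, w j * x t j) t) := by
  have h1δ : (1:ℝ) + δ ≠ 0 := by positivity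
  set a : Fin n := ⟨i - 1, by omega⟩ with ha
  set b : Fin n := ⟨i + 1, hi2⟩ with hb
  have hab : a ≠ b := by
    intro h
    have := congrArg Fin.val h
    simp only [ha, hb] at this
    omega
  have key : ∀ l : Fin n, W a l - W b l = (1 + δ) * w l := by
    intro l
    rw [hW, hW, hw]
    simp only [ha, hb, Fin.val_mk]
    split_ifs <;> first | (exfalso; omega) | (field_simp; try ring)
  have main : ∀ x : Fin n → ℝ,
      (∀ j : Fin n, ((j : ℕ) = i - 1 ∨ (j : ℕ) = i ∨ (j : ℕ) = i + 1) →
        0 ≤ W.mulVec x j + c) →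
      (∀ k : Fin n, ¬((k : ℕ) = i - 1 ∨ (k : ℕ) = i ∨ (k : ℕ) = i + 1) →
        W.mulVec x k + c ≤ 0) →
      (∑ j, w j * (-(x j) + max (W.mulVec x j + c) 0)) = δ * ∑ j, w j * x j := by
    intro x hpos hneg
    have hpt : ∀ j : Fin n, w j * max (W.mulVec x j + c) 0 =
        (if j = a then (W.mulVec x a + c) else 0)
        + (if j = b then -(W.mulVec x b + c) else 0) := by
      intro j
      by_cases hja : j = a
      · have hj : (j : ℕ) = i - 1 := by rw [hja]
        rw [if_pos hja, if_neg (by rw [hja]; exact hab), ← hja]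
        have h1 : w j = 1 := by rw [hw, if_pos hj]
        have h2 : max (W.mulVec x j + c) 0 = W.mulVec x j + c :=
          max_eq_left (hpos j (Or.inl hj))
        rw [h1, h2]; ring
      · rw [if_neg hja]
        by_cases hjb : j = b
        · have hj : (j : ℕ) = i + 1 := by rw [hjb]
          rw [if_pos hjb, ← hjb]
          have h1 : w j = -1 := by
            rw [hw, if_neg (by omega), if_pos hj]
          have h2 : max (W.mulVec x j + c) 0 = W.mulVec x j + c :=
            max_eq_left (hpos j (Or.inr (Or.inr hj)))
          rw [h1, h2]; ring
        · rw [if_neg hjb]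
          have hva : (j : ℕ) ≠ i - 1 := by
            intro h; exact hja (Fin.ext (h.trans rfl))
          have hvb : (j : ℕ) ≠ i + 1 := by
            intro h; exact hjb (Fin.ext (h.trans rfl))
          by_cases hvi : (j : ℕ) = i
          · have h1 : w j = 0 := by
              rw [hw]
              rw [if_neg hva, if_neg hvb, if_neg (by omega), if_neg (by omega)]
            rw [h1]; ring
          · have h2 : max (W.mulVec x j + c) 0 = 0 :=
              max_eq_right (hneg j (by push_neg; exact ⟨hva, hvi, hvb⟩))
            rw [h2]; ring
    have hsum1 : ∑ j, w j * max (W.mulVec x j + c) 0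
        = (W.mulVec x a + c) + -(W.mulVec x b + c) := by
      rw [Finset.sum_congr rfl (fun j _ => hpt j), Finset.sum_add_distrib,
        Finset.sum_ite_eq' Finset.univ a, Finset.sum_ite_eq' Finset.univ b]
      simp
    have hsum2 : (W.mulVec x a + c) + -(W.mulVec x b + c)
        = (1 + δ) * ∑ j, w j * x j := by
      have : W.mulVec x a - W.mulVec x b = ∑ l, (W a l - W b l) * x l := by
        simp only [Matrix.mulVec, dotProduct, ← Finset.sum_sub_distrib]
        exact Finset.sum_congr rfl (fun l _ => by ring)
      have h2 : ∑ l, (W a l - W b l) * x l = (1 + δ) * ∑ l, w l * x l := by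
        rw [Finset.mul_sum]
        exact Finset.sum_congr rfl (fun l _ => by rw [key l]; ring)
      calc (W.mulVec x a + c) + -(W.mulVec x b + c)
          = W.mulVec x a - W.mulVec x b := by ring
        _ = _ := by rw [this, h2]
    calc (∑ j, w j * (-(x j) + max (W.mulVec x j + c) 0))
        = (∑ j, w j * max (W.mulVec x j + c) 0) - ∑ j, w j * x j := by
          rw [← Finset.sum_sub_distrib]
          exact Finset.sum_congr rfl (fun j _ => by ring)
      _ = δ * ∑ j, w j * x j := by rw [hsum1, hsum2]; ring
  refine ⟨main, ?_⟩
  intro x t hderiv hpos hneg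
  have h := HasDerivAt.fun_sum (u := Finset.univ)
    (A := fun j s => w j * x s j)
    (A' := fun j => w j * (-(x t j) + max (W.mulVec (x t) j + c) 0))
    (fun j _ => (hderiv j).const_mul (w j))
  rwa [main (x t) hpos hneg] at h
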